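/- Let p be an odd prime, K = Q(ζ_p), p = (1-ζ_p), and k a positive multiple of p-1 with k ≥ p-1. If x is a unit of ℤ[ζ_p] with x ≡ 1 (mod p^k), then x ≡ 1 (mod p^{k+1}). -/

import Mathlib

open NumberField

private lemma one_sub_pow_aux {R : Type*} [CommRing R] (t : R) (j : ℕ) :
    ∃ a : R, (1 - t) ^ j = 1 - (j : R) * t + t ^ 2 * a := by
  induction j with
  | zero => exact ⟨0, by simp⟩
  | succ n ih =>
    obtain ⟨a, ha⟩ := ih
    refine ⟨(n : R) + a - t * a, ?_⟩
    rw [pow_succ, ha]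
    push_cast
    ring

private lemma prod_one_add_aux {R : Type*} [CommRing R] {ι : Type*} (S : Finset ι)
    (f : ι → R) (q : R) (h : ∀ i ∈ S, q ∣ f i) :
    q ^ 2 ∣ (∏ i ∈ S, (1 + f i)) - (1 + ∑ i ∈ S, f i) := by
  classical
  induction S using Finset.induction_on with
  | empty => simp
  | @insert a s ha ih =>
    obtain ⟨c, hc⟩ := ih (fun i hi => h i (Finset.mem_insert_of_mem hi))
    obtain ⟨b, hb⟩ := h a (Finset.mem_insert_self a s)
    obtain ⟨s', hs'⟩ : q ∣ ∑ i ∈ s, f i :=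
      Finset.dvd_sum fun i hi => h i (Finset.mem_insert_of_mem hi)
    have hP : ∏ i ∈ s, (1 + f i) = q ^ 2 * c + (1 + ∑ i ∈ s, f i) :=
      sub_eq_iff_eq_add.mp hc
    refine ⟨c + b * s' + b * (q * c), ?_⟩
    rw [Finset.prod_insert ha, Finset.sum_insert ha, hP, hb, hs']
    ring

/-- Let `p` be an odd prime, `K = ℚ(ζ_p)`, `𝔭 = (1 - ζ_p)`, and `k` a positive
multiple of `p - 1` (so `k ≥ p - 1`).  If `x` is a unit of `ℤ[ζ_p]` with
`x ≡ 1 (mod 𝔭^k)`, then `x ≡ 1 (mod 𝔭^(k+1))`. -/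
theorem stmt7 (p : ℕ+) (hp : (p : ℕ).Prime) (hodd : (p : ℕ) ≠ 2)
    (K : Type*) [Field K] [NumberField K] [IsCyclotomicExtension {(p : ℕ)} ℚ K]
    (ζ : 𝓞 K) (hζ : IsPrimitiveRoot ζ p)
    (k : ℕ) (hk0 : 0 < k) (hk : ((p : ℕ) - 1) ∣ k)
    (x : (𝓞 K)ˣ) (hx : (x : 𝓞 K) - 1 ∈ (Ideal.span {1 - ζ}) ^ k) :
    (x : 𝓞 K) - 1 ∈ (Ideal.span {1 - ζ}) ^ (k + 1) := by
  classical
  haveI : Fact (p : ℕ).Prime := ⟨hp⟩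
  haveI : IsGalois ℚ K := IsCyclotomicExtension.isGalois {(p : ℕ)} ℚ K
  set π : 𝓞 K := 1 - ζ with hπ_def
  have hinj : Function.Injective (algebraMap (𝓞 K) K) := RingOfIntegers.coe_injective
  have hζK : IsPrimitiveRoot (algebraMap (𝓞 K) K ζ) p := hζ.map_of_injective hinj
  have htoInt : hζK.toInteger = ζ := rfl
  -- π is prime
  have hprime : Prime π := by
    have h1 : Prime (hζK.toInteger - 1) := hζK.zeta_sub_one_prime'
    rw [htoInt] at h1
    have : π = -(ζ - 1) := by rw [hπ_def]; ring
    rw [this]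
    exact h1.neg
  have hπ0 : π ≠ 0 := hprime.ne_zero
  -- π divides every 1 - ζ ^ m
  have hdvd_one_sub : ∀ m : ℕ, π ∣ 1 - ζ ^ m := fun m => by
    simpa using sub_dvd_pow_sub_pow 1 ζ m
  -- π ∣ p
  have hπp : π ∣ ((p : ℕ) : 𝓞 K) := by
    have hgeom : ∑ i ∈ Finset.range (p : ℕ), ζ ^ i = 0 :=
      hζ.geom_sum_eq_zero hp.one_lt
    have hsum : ((p : ℕ) : 𝓞 K) = ∑ i ∈ Finset.range (p : ℕ), (1 - ζ ^ i) := by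
      rw [Finset.sum_sub_distrib, hgeom, sub_zero, Finset.sum_const, Finset.card_range,
        nsmul_eq_mul, mul_one]
    rw [hsum]
    exact Finset.dvd_sum fun i _ => hdvd_one_sub i
  rw [Ideal.span_singleton_pow, Ideal.mem_span_singleton] at hx ⊢
  obtain ⟨y, hy⟩ := hx
  -- the Galois action on the ring of integers
  set res : (K ≃ₐ[ℚ] K) → (𝓞 K ≃ₐ[ℤ] 𝓞 K) := fun σ => galRestrict ℤ ℚ K (𝓞 K) σ with hres
  -- σ fixes everything mod π
  have hσfix : ∀ (σ : K ≃ₐ[ℚ] K) (z : 𝓞 K), π ∣ (res σ) z - z := by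
    intro σ z
    obtain ⟨j, hjlt, hj⟩ := hζ.eq_pow_of_pow_eq_one
      (ξ := (res σ) ζ) (by rw [← map_pow, hζ.pow_eq_one, map_one])
    obtain ⟨f, hf⟩ := hζK.integralPowerBasis.exists_eq_aeval' z
    rw [hζK.integralPowerBasis_gen, htoInt] at hf
    have hres_z : (res σ) z = Polynomial.aeval ((res σ) ζ) f := by
      rw [hf]
      exact (Polynomial.aeval_algHom_apply (res σ).toAlgHom ζ f).symm
    rw [hres_z, hf, ← hj]
    have hζζ : π ∣ ζ ^ j - ζ := by
      have h1 : π ∣ 1 - ζ ^ j := hdvd_one_sub j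
      have h2 : π ∣ 1 - ζ ^ 1 := hdvd_one_sub 1
      have : ζ ^ j - ζ = (1 - ζ ^ 1) - (1 - ζ ^ j) := by ring
      rw [this]
      exact dvd_sub h2 h1
    calc π ∣ ζ ^ j - ζ := hζζ
    _ ∣ Polynomial.aeval (ζ ^ j) f - Polynomial.aeval ζ f := by
        simp only [Polynomial.aeval_def, Polynomial.eval₂_eq_eval_map]
        exact Polynomial.sub_dvd_eval_sub _ _ _
  -- key congruence for each σ
  have key : ∀ σ : K ≃ₐ[ℚ] K, π ^ (k + 1) ∣ (res σ) ((x : 𝓞 K) - 1) - π ^ k * y := by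
    intro σ
    obtain ⟨j, hjlt, hj⟩ := hζ.eq_pow_of_pow_eq_one
      (ξ := (res σ) ζ) (by rw [← map_pow, hζ.pow_eq_one, map_one])
    have hj0 : 0 < j := by
      rcases Nat.eq_zero_or_pos j with h | h
      swap
      · exact h
      · exfalso
        rw [h, pow_zero] at hj
        have : ζ = 1 := (res σ).injective (by rw [← hj, map_one])
        exact hζ.ne_one hp.one_lt this
    -- σ π = π * c
    obtain ⟨a, ha⟩ := one_sub_pow_aux π j
    have hζπ : ζ = 1 - π := by rw [hπ_def]; ring
    set c : 𝓞 K := (j : 𝓞 K) - π * a with hc_def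
    have hσπ : (res σ) π = π * c := by
      have : (res σ) π = 1 - ζ ^ j := by
        rw [hπ_def, map_sub, map_one, hj]
      rw [this, hζπ, ha, hc_def]
      ring
    -- c ^ k ≡ 1 mod π
    have hck : π ∣ c ^ k - 1 := by
      have h1 : π ∣ c ^ k - (j : 𝓞 K) ^ k := by
        have : π ∣ c - (j : 𝓞 K) := ⟨-a, by rw [hc_def]; ring⟩
        exact this.trans (sub_dvd_pow_sub_pow c _ k)
      have h2 : π ∣ (j : 𝓞 K) ^ k - 1 := by
        have hjk : ((p : ℕ) : ℤ) ∣ (j : ℤ) ^ k - 1 := by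
          have hjz : (j : ZMod (p : ℕ)) ≠ 0 := by
            rw [Ne, ZMod.natCast_eq_zero_iff]
            exact fun hdvd => absurd (Nat.le_of_dvd hj0 hdvd) (not_le.mpr hjlt)
          have hpow : (j : ZMod (p : ℕ)) ^ k = 1 := by
            obtain ⟨m, rfl⟩ := hk
            rw [pow_mul, ZMod.pow_card_sub_one_eq_one hjz, one_pow]
          have := (ZMod.intCast_zmod_eq_zero_iff_dvd ((j : ℤ) ^ k - 1) (p : ℕ)).mp (by
            push_cast
            rw [hpow, sub_self])
          exact this
        obtain ⟨t, ht⟩ := hjk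
        refine hπp.trans ⟨(t : 𝓞 K), ?_⟩
        have := congrArg (fun z : ℤ => (z : 𝓞 K)) ht
        push_cast at this
        linear_combination this
      have : c ^ k - 1 = (c ^ k - (j : 𝓞 K) ^ k) + ((j : 𝓞 K) ^ k - 1) := by ring
      rw [this]
      exact dvd_add h1 h2
    have hres_d : (res σ) ((x : 𝓞 K) - 1) = π ^ k * (c ^ k * (res σ) y) := by
      rw [hy, map_mul, map_pow, hσπ, mul_pow]
      ring
    rw [hres_d]
    have heq : π ^ k * (c ^ k * (res σ) y) - π ^ k * y
        = π ^ k * (c ^ k * ((res σ) y - y) + (c ^ k - 1) * y) := by ring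
    rw [heq, pow_succ]
    exact mul_dvd_mul_left _ (dvd_add ((hσfix σ y).mul_left _) (hck.mul_right y))
  -- the norm of x, as a product over the Galois group
  set N : 𝓞 K := ∏ σ : K ≃ₐ[ℚ] K, (res σ) (x : 𝓞 K) with hN_def
  have hNpm : N = 1 ∨ N = -1 := by
    have hNcoe : (algebraMap (𝓞 ℚ) (𝓞 K) (RingOfIntegers.norm ℚ (x : 𝓞 K))) = N := by
      apply hinj
      have h1 : (algebraMap (𝓞 K) K) ((algebraMap (𝓞 ℚ) (𝓞 K)) (RingOfIntegers.norm ℚ (x : 𝓞 K)))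
          = algebraMap ℚ K (Algebra.norm ℚ ((x : 𝓞 K) : K)) :=
        RingOfIntegers.coe_algebraMap_norm ℚ (x : 𝓞 K)
      rw [h1, Algebra.norm_eq_prod_automorphisms, hN_def, map_prod]
      exact Finset.prod_congr rfl fun σ _ =>
        (algebraMap_galRestrict_apply ℤ σ (x : 𝓞 K)).symm
    have hU : IsUnit (RingOfIntegers.norm ℚ (x : 𝓞 K)) :=
      (RingOfIntegers.isUnit_norm ℚ).mpr x.isUnit
    set e := Rat.ringOfIntegersEquiv
    have hUe : IsUnit (e (RingOfIntegers.norm ℚ (x : 𝓞 K))) := hU.map e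
    rcases Int.isUnit_iff.mp hUe with h1 | h1
    · left
      rw [← hNcoe]
      have : RingOfIntegers.norm ℚ (x : 𝓞 K) = 1 := by
        have := congrArg e.symm h1
        rwa [RingEquiv.symm_apply_apply, map_one] at this
      rw [this, map_one]
    · right
      rw [← hNcoe]
      have : RingOfIntegers.norm ℚ (x : 𝓞 K) = -1 := by
        have := congrArg e.symm h1
        rwa [RingEquiv.symm_apply_apply, map_neg, map_one] at this
      rw [this, map_neg, map_one]
  -- expand the product
  set f : (K ≃ₐ[ℚ] K) → 𝓞 K := fun σ => (res σ) ((x : 𝓞 K) - 1) with hf_def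
  have hfd : ∀ σ : K ≃ₐ[ℚ] K, π ^ k ∣ f σ := by
    intro σ
    have h1 : π ^ k ∣ f σ - π ^ k * y := (pow_dvd_pow π (Nat.le_succ k)).trans (key σ)
    have : f σ = (f σ - π ^ k * y) + π ^ k * y := by ring
    rw [this]
    exact dvd_add h1 (Dvd.intro y rfl)
  have hNprod : N = ∏ σ : K ≃ₐ[ℚ] K, (1 + f σ) := by
    rw [hN_def]
    refine Finset.prod_congr rfl fun σ _ => ?_
    rw [hf_def]
    simp only [map_sub, map_one]
    ring
  have hexp : π ^ (k + 1) ∣ N - (1 + ∑ σ : K ≃ₐ[ℚ] K, f σ) := by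
    have h2k : π ^ (2 * k) ∣ N - (1 + ∑ σ : K ≃ₐ[ℚ] K, f σ) := by
      rw [hNprod]
      have := prod_one_add_aux Finset.univ f (π ^ k) (fun σ _ => hfd σ)
      rwa [← pow_mul, mul_comm k 2] at this
    exact (pow_dvd_pow π (by omega)).trans h2k
  -- the sum
  have hcard : Fintype.card (K ≃ₐ[ℚ] K) = (p : ℕ) - 1 := by
    rw [← Nat.card_eq_fintype_card, IsGalois.card_aut_eq_finrank,
      IsCyclotomicExtension.finrank K (Polynomial.cyclotomic.irreducible_rat p.pos),
      Nat.totient_prime hp]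
  have hsum : π ^ (k + 1) ∣ (∑ σ : K ≃ₐ[ℚ] K, f σ) - (((p : ℕ) - 1 : ℕ) : 𝓞 K) * (π ^ k * y) := by
    have : (∑ σ : K ≃ₐ[ℚ] K, f σ) - (((p : ℕ) - 1 : ℕ) : 𝓞 K) * (π ^ k * y)
        = ∑ σ : K ≃ₐ[ℚ] K, (f σ - π ^ k * y) := by
      rw [Finset.sum_sub_distrib, Finset.sum_const, ← hcard]
      simp [nsmul_eq_mul, Finset.card_univ]
    rw [this]
    exact Finset.dvd_sum fun σ _ => key σ
  -- N = 1
  have hN1 : N = 1 := by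
    rcases hNpm with h | h
    · exact h
    · exfalso
      have hπN : π ∣ N - 1 - (((p : ℕ) - 1 : ℕ) : 𝓞 K) * (π ^ k * y) + (((p : ℕ) - 1 : ℕ) : 𝓞 K) * (π ^ k * y) := by
        refine dvd_add ?_ ?_
        · have : N - 1 - (((p : ℕ) - 1 : ℕ) : 𝓞 K) * (π ^ k * y)
              = (N - (1 + ∑ σ : K ≃ₐ[ℚ] K, f σ))
                + ((∑ σ : K ≃ₐ[ℚ] K, f σ) - (((p : ℕ) - 1 : ℕ) : 𝓞 K) * (π ^ k * y)) := by
            ring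
          rw [this]
          exact (dvd_pow_self π (Nat.succ_ne_zero k)).trans (dvd_add hexp hsum)
        · exact Dvd.dvd.mul_left (Dvd.dvd.mul_right (dvd_pow_self π hk0.ne') y) _
      rw [h] at hπN
      have hπ2 : π ∣ (2 : 𝓞 K) := by
        have : (-1 : 𝓞 K) - 1 - (((p : ℕ) - 1 : ℕ) : 𝓞 K) * (π ^ k * y) + (((p : ℕ) - 1 : ℕ) : 𝓞 K) * (π ^ k * y) = -2 := by ring
        rw [this] at hπN
        exact (dvd_neg.mp hπN)
      have hcop : IsCoprime (2 : 𝓞 K) (((p : ℕ) : ℤ) : 𝓞 K) := by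
        have h2 : IsCoprime (2 : ℤ) ((p : ℕ) : ℤ) := by
          rw [Int.isCoprime_iff_gcd_eq_one]
          have : Nat.Coprime 2 (p : ℕ) :=
            (Nat.coprime_primes Nat.prime_two hp).mpr (fun h => hodd h.symm)
          simpa [Int.gcd] using this
        have := h2.map (algebraMap ℤ (𝓞 K))
        simpa using this
      have hπp' : π ∣ (((p : ℕ) : ℤ) : 𝓞 K) := by
        push_cast
        exact_mod_cast hπp
      exact hprime.not_unit (hcop.isUnit_of_dvd' hπ2 hπp')
  -- conclude
  have hfinal : π ^ (k + 1) ∣ (((p : ℕ) - 1 : ℕ) : 𝓞 K) * (π ^ k * y) := by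
    have h1 : π ^ (k + 1) ∣ -(N - (1 + ∑ σ : K ≃ₐ[ℚ] K, f σ))
        - ((∑ σ : K ≃ₐ[ℚ] K, f σ) - (((p : ℕ) - 1 : ℕ) : 𝓞 K) * (π ^ k * y)) :=
      dvd_sub (dvd_neg.mpr hexp) hsum
    have : -(N - (1 + ∑ σ : K ≃ₐ[ℚ] K, f σ))
        - ((∑ σ : K ≃ₐ[ℚ] K, f σ) - (((p : ℕ) - 1 : ℕ) : 𝓞 K) * (π ^ k * y))
        = 1 - N + (((p : ℕ) - 1 : ℕ) : 𝓞 K) * (π ^ k * y) := by ring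
    rw [this, hN1] at h1
    simpa using h1
  have hcast : (((p : ℕ) - 1 : ℕ) : 𝓞 K) = ((p : ℕ) : 𝓞 K) - 1 := by
    have : 1 ≤ (p : ℕ) := hp.one_le
    push_cast [Nat.cast_sub this]
    ring
  have hπy : π ∣ ((((p : ℕ) : 𝓞 K) - 1) * y) := by
    have h1 : π ^ k * π ∣ π ^ k * ((((p : ℕ) : 𝓞 K) - 1) * y) := by
      have : π ^ k * ((((p : ℕ) : 𝓞 K) - 1) * y) = (((p : ℕ) - 1 : ℕ) : 𝓞 K) * (π ^ k * y) := by
        rw [hcast]; ring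
      rw [this, ← pow_succ]
      exact hfinal
    exact (mul_dvd_mul_iff_left (pow_ne_zero k hπ0)).mp h1
  rcases hprime.dvd_mul.mp hπy with h | h
  · exfalso
    have : π ∣ (1 : 𝓞 K) := by
      have : (1 : 𝓞 K) = ((p : ℕ) : 𝓞 K) - (((p : ℕ) : 𝓞 K) - 1) := by ring
      rw [this]
      exact dvd_sub hπp h
    exact hprime.not_unit (isUnit_of_dvd_one this)
  · rw [hy, pow_succ]
    exact mul_dvd_mul_left _ h
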